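/- Let f : Finset α → ℝ be a nonnegative, monotone, submodular set function, let O be a finite set with |O| = k ≥ 1, and let i be a natural number with 0 ≤ i ≤ k. Then there exists a subset S ⊆ O with |S| ≤ i and f(S) ≥ (i/k)·f(O). -/

import Mathlib

open Finset

lemma aux_sum_loss {α : Type*} [DecidableEq α] (f : Finset α → ℝ)
    (hsub : ∀ A B, f (A ∪ B) + f (A ∩ B) ≤ f A + f B) :
    ∀ S : Finset α, ∑ x ∈ S, (f S - f (S.erase x)) ≤ f S - f ∅ := by
  intro S
  induction S using Finset.induction_on with
  | empty => simp
  | @insert a T ha ih =>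
    rw [Finset.sum_insert ha, Finset.erase_insert ha]
    have h2 : ∀ x ∈ T, f (insert a T) - f ((insert a T).erase x) ≤ f T - f (T.erase x) := by
      intro x hx
      have hax : a ≠ x := fun h => ha (h ▸ hx)
      have hU : T ∪ (insert a T).erase x = insert a T := by
        ext y
        simp only [Finset.mem_union, Finset.mem_erase, Finset.mem_insert]
        constructor
        · rintro (h | ⟨-, h⟩)
          · exact Or.inr h
          · exact h
        · rintro (rfl | h)
          · exact Or.inr ⟨hax, Or.inl rfl⟩
          · exact Or.inl h
      have hI : T ∩ (insert a T).erase x = T.erase x := by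
        ext y
        simp only [Finset.mem_inter, Finset.mem_erase, Finset.mem_insert]
        constructor
        · rintro ⟨hT, hne, -⟩; exact ⟨hne, hT⟩
        · rintro ⟨hne, hT⟩; exact ⟨hT, hne, Or.inr hT⟩
      have := hsub T ((insert a T).erase x)
      rw [hU, hI] at this
      linarith
    have h3 : ∑ x ∈ T, (f (insert a T) - f ((insert a T).erase x))
        ≤ ∑ x ∈ T, (f T - f (T.erase x)) := Finset.sum_le_sum h2
    linarith

/-- Restriction lemma: for a nonnegative monotone submodular f and |O| = k ≥ 1,
    for every 0 ≤ i ≤ k there is S ⊆ O with |S| ≤ i and f(S) ≥ (i/k)·f(O). -/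
theorem restriction_lemma {α : Type*} [DecidableEq α] (f : Finset α → ℝ)
    (hnn : ∀ A, 0 ≤ f A)
    (hmono : ∀ A B, A ⊆ B → f A ≤ f B)
    (hsub : ∀ A B, f (A ∪ B) + f (A ∩ B) ≤ f A + f B)
    (O : Finset α) (k : ℕ) (hcard : O.card = k) (hk : 1 ≤ k)
    (i : ℕ) (hi : i ≤ k) :
    ∃ S ⊆ O, S.card ≤ i ∧ (i : ℝ) / (k : ℝ) * f O ≤ f S := by
  have hk0 : (0 : ℝ) < (k : ℝ) := by exact_mod_cast hk
  have key : ∀ n, n ≤ k → ∃ S ⊆ O, S.card = k - n ∧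
      ((k - n : ℕ) : ℝ) / (k : ℝ) * f O ≤ f S := by
    intro n
    induction n with
    | zero =>
      intro _
      refine ⟨O, Finset.Subset.refl O, by simp [hcard], ?_⟩
      rw [Nat.sub_zero, div_self hk0.ne', one_mul] <;> simp
    | succ n ih =>
      intro hn1
      obtain ⟨S, hSO, hScard, hfS⟩ := ih (Nat.le_of_succ_le hn1)
      have hm1 : 1 ≤ k - n := by omega
      set m := k - n with hm
      have hM1 : (1 : ℝ) ≤ (m : ℝ) := by exact_mod_cast hm1
      have hM0 : (0 : ℝ) < (m : ℝ) := by linarith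
      have hSne : S.Nonempty := by
        rw [← Finset.card_pos, hScard]; omega
      -- average argument
      have hsum : ∑ x ∈ S, (f S - f (S.erase x)) ≤ ∑ x ∈ S, f S / (m : ℝ) := by
        have h1 := aux_sum_loss f hsub S
        have h2 : ∑ x ∈ S, f S / (m : ℝ) = f S := by
          rw [Finset.sum_const, hScard, nsmul_eq_mul]
          field_simp
        rw [h2]
        have := hnn (∅ : Finset α)
        linarith
      obtain ⟨x, hxS, hx⟩ := Finset.exists_le_of_sum_le hSne hsum
      refine ⟨S.erase x, (Finset.erase_subset x S).trans hSO, ?_, ?_⟩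
      · rw [Finset.card_erase_of_mem hxS, hScard]; omega
      have hE : f S - f S / (m : ℝ) ≤ f (S.erase x) := by linarith
      have hfO : 0 ≤ f O := hnn O
      have hcast : ((k - (n+1) : ℕ) : ℝ) = (m : ℝ) - 1 := by
        have : k - (n+1) = m - 1 := by omega
        rw [this, Nat.cast_sub hm1, Nat.cast_one]
      rw [hcast]
      have h1 : ((m : ℝ) - 1) / (k : ℝ) * f O
          = ((m : ℝ) / (k : ℝ) * f O) * (((m : ℝ) - 1) / (m : ℝ)) := by
        field_simp
      have hnng : 0 ≤ ((m : ℝ) - 1) / (m : ℝ) := by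
        apply div_nonneg <;> linarith
      have h2 : ((m : ℝ) / (k : ℝ) * f O) * (((m : ℝ) - 1) / (m : ℝ))
          ≤ f S * (((m : ℝ) - 1) / (m : ℝ)) :=
        mul_le_mul_of_nonneg_right hfS hnng
      have h3 : f S * (((m : ℝ) - 1) / (m : ℝ)) = f S - f S / (m : ℝ) := by
        field_simp
      linarith
  obtain ⟨S, hSO, hScard, hfS⟩ := key (k - i) (Nat.sub_le k i)
  have hki : k - (k - i) = i := Nat.sub_sub_self hi
  rw [hki] at hScard hfS
  exact ⟨S, hSO, le_of_eq hScard, hfS⟩
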